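/- The hexagon commutes: for the functor Ǔ from quivers to incidence hypergraphs followed by simplification S_R to incidence structures, and the underlying multigraph functor U followed by the inclusions into H, into H⁺, and the isomorphism C to incidence structures, one has S_R ∘ Ǔ = C ∘ N_{H⁺} ∘ N_H ∘ U as functors from quivers to incidence structures. -/

import Mathlib

/-- A quiver. -/
structure Quiv : Type 1 where
  V : Type
  E : Type
  s : E → V
  t : E → V

/-- A quiver homomorphism. -/
structure QuivHom (Q Q' : Quiv) where
  fv : Q.V → Q'.V
  fe : Q.E → Q'.E
  hs : ∀ e, Q'.s (fe e) = fv (Q.s e)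
  ht : ∀ e, Q'.t (fe e) = fv (Q.t e)

/-- An incidence hypergraph. -/
structure IncHyp : Type 1 where
  V : Type
  E : Type
  I : Type
  port : I → V
  att : I → E

/-- An incidence hypergraph homomorphism. -/
structure IncHom (G G' : IncHyp) where
  fv : G.V → G'.V
  fe : G.E → G'.E
  fi : G.I → G'.I
  hport : ∀ i, G'.port (fi i) = fv (G.port i)
  hatt : ∀ i, G'.att (fi i) = fe (G.att i)

/-- An incidence structure. -/
structure IStr : Type 1 where
  V : Type
  E : Type
  I : Set (V × E)

/-- A set-system hypergraph. -/
structure SSHyp : Type 1 where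
  E : Type
  V : Type
  eps : E → Set V

/-- A traditional set-system hypergraph homomorphism. -/
structure TradHom (G H : SSHyp) where
  fe : G.E → H.E
  fv : G.V → H.V
  comm : ∀ e, H.eps (fe e) = fv '' G.eps e

/-- The associated incidence hypergraph Ǔ(Q) of a quiver. -/
def Ucheck (Q : Quiv) : IncHyp :=
  ⟨Q.V, Q.E, Bool × Q.E, fun j => if j.1 then Q.t j.2 else Q.s j.2, fun j => j.2⟩

/-- The action of Ǔ on quiver homomorphisms. -/
def UcheckHom {Q Q' : Quiv} (φ : QuivHom Q Q') : IncHom (Ucheck Q) (Ucheck Q') :=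
  ⟨φ.fv, φ.fe, fun j => (j.1, φ.fe j.2),
    fun j => by rcases j with ⟨b, e⟩; cases b <;> simp [Ucheck, φ.hs, φ.ht],
    fun j => rfl⟩

/-- `S_R`: simplification of an incidence hypergraph to an incidence structure. -/
def SR (G : IncHyp) : IStr :=
  ⟨G.V, G.E, {p | ∃ j, (G.port j, G.att j) = p}⟩

/-- The action of `S_R` on homomorphisms: the pair of vertex and edge functions. -/
def SRhom {G G' : IncHyp} (ψ : IncHom G G') : (G.V → G'.V) × (G.E → G'.E) :=
  (ψ.fv, ψ.fe)

/-- `U`: the underlying multigraph (set-system hypergraph) of a quiver. -/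
def Umult (Q : Quiv) : SSHyp :=
  ⟨Q.E, Q.V, fun e => {Q.s e, Q.t e}⟩

/-- The action of `U` on quiver homomorphisms (a traditional multigraph
homomorphism; the inclusions `N_H`, `N_{H⁺}` leave it unchanged). -/
def UmultHom {Q Q' : Quiv} (φ : QuivHom Q Q') : TradHom (Umult Q) (Umult Q') :=
  ⟨φ.fe, φ.fv, fun (e : Q.E) => by
    show ({Q'.s (φ.fe e), Q'.t (φ.fe e)} : Set Q'.V) = φ.fv '' {Q.s e, Q.t e}
    rw [φ.hs, φ.ht, Set.image_insert_eq, Set.image_singleton]⟩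

/-- `C`: the incidence structure of a set-system hypergraph. -/
def Cmap (G : SSHyp) : IStr :=
  ⟨G.V, G.E, {p | p.1 ∈ G.eps p.2}⟩

/-- The action of `C` on homomorphisms: the pair of vertex and edge functions. -/
def Chom {G H : SSHyp} (φ : TradHom G H) : (G.V → H.V) × (G.E → H.E) :=
  (φ.fv, φ.fe)

/-- The hexagon commutes: `S_R ∘ Ǔ = C ∘ N_{H⁺} ∘ N_H ∘ U` as functors from quivers to
incidence structures, both on objects and on homomorphisms. -/
theorem hexagon_commutes :
    (∀ Q : Quiv, SR (Ucheck Q) = Cmap (Umult Q)) ∧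
    (∀ (Q Q' : Quiv) (φ : QuivHom Q Q'), SRhom (UcheckHom φ) = Chom (UmultHom φ)) := by
  constructor
  · intro Q
    unfold SR Ucheck Cmap Umult
    congr 1
    ext ⟨v, e⟩
    constructor
    · rintro ⟨⟨b, e'⟩, h⟩
      cases h
      cases b <;> simp
    · rintro (h | h)
      · exact ⟨(false, e), by simp_all⟩
      · exact ⟨(true, e), by simp_all⟩
  · intro Q Q' φ
    rfl
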